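/- Let A ⊆ B be C*-algebras, (i,B,α) an A-dynamical system, φ : A → A a contractive completely positive map, and E : B → A an α-expectation with E(α(a)) = φ(a) for a ∈ A. Then for all k ≥ 1, nonnegative integers n₁,…,n_k, and a₁,…,a_k ∈ A, E(α^{n₁}(a₁) α^{n₂}(a₂) ⋯ α^{n_k}(a_k)) = [n₁,…,n_k; a₁,…,a_k], the moment polynomial of φ. In particular, there is at most one α-expectation E with E(α(a)) = φ(a). -/

import Mathlib

open scoped ComplexOrder

variable {B : Type*} [NonUnitalNormedRing B] [StarRing B] [CStarRing B]
  [NormedSpace ℂ B] [IsScalarTower ℂ B B] [SMulCommClass ℂ B B] [StarModule ℂ B]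
  [CompleteSpace B] [PartialOrder B] [StarOrderedRing B]

/-- The hereditary subalgebra `[ABA]` generated by `A` in `B`: the closed linear
span of `{a x b : a, b ∈ A, x ∈ B}`. -/
def hereditarySpan (A : NonUnitalStarSubalgebra ℂ B) : Set B :=
  closure (Submodule.span ℂ {z : B | ∃ a ∈ A, ∃ b ∈ A, ∃ x : B, z = a * x * b} : Set B)

/-- A conditional expectation of `B` onto the C*-subalgebra `A`: an idempotent
positive `A`-bimodule map with range `A`. -/
def IsCondExp (A : NonUnitalStarSubalgebra ℂ B) (E : B →L[ℂ] B) : Prop :=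
  (∀ x, E x ∈ A) ∧ (∀ a ∈ A, E a = a) ∧ (∀ x : B, 0 ≤ x → 0 ≤ E x) ∧
  (∀ a ∈ A, ∀ x, E (a * x) = a * E x) ∧ (∀ a ∈ A, ∀ x, E (x * a) = E x * a)

/-- The product `α^{n₁}(a₁) ⋯ α^{n_k}(a_k)` associated to a list of pairs
`(nᵢ, aᵢ)` (and `0` for the empty list). -/
def prodOf (α : B → B) : List (ℕ × B) → B
  | [] => 0
  | p :: rest => rest.foldl (fun acc q => acc * (α^[q.1] q.2)) (α^[p.1] p.2)

/-- `(A, B, α)` is an `A`-dynamical system: `B` is the closed linear span of the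
finite products `α^{n₁}(a₁) ⋯ α^{n_k}(a_k)` with `aᵢ ∈ A`, `nᵢ ≥ 0`. -/
def IsDynSystem (A : NonUnitalStarSubalgebra ℂ B) (α : B →⋆ₙₐ[ℂ] B) : Prop :=
  (Submodule.span ℂ {x : B | ∃ l : List (ℕ × B), l ≠ [] ∧ (∀ p ∈ l, p.2 ∈ A) ∧
    x = prodOf (⇑α) l}).topologicalClosure = ⊤

/-- An `α`-expectation: a conditional expectation `E : B → A` satisfying the
equivariance axiom (E1) `E ∘ α = E ∘ α ∘ E` and (E2) multiplicativity on the
hereditary subalgebra `[ABA]`. -/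
def IsAlphaExpectation (A : NonUnitalStarSubalgebra ℂ B) (α : B →⋆ₙₐ[ℂ] B)
    (E : B →L[ℂ] B) : Prop :=
  IsCondExp A E ∧ (∀ x, E (α x) = E (α (E x))) ∧
    (∀ x ∈ hereditarySpan A, ∀ y ∈ hereditarySpan A, E (x * y) = E x * E y)

open Filter Topology

section Aux

variable {A : NonUnitalStarSubalgebra ℂ B} {α : B →⋆ₙₐ[ℂ] B}

lemma mem_hereditarySpan_of {e f : B} (he : e ∈ A) (hf : f ∈ A) (z : B) :
    e * z * f ∈ hereditarySpan A :=
  subset_closure (Submodule.subset_span ⟨e, he, f, hf, z, rfl⟩)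

private lemma foldl_mul_assoc (g : ℕ × B → B) :
    ∀ (l : List (ℕ × B)) (x y : B),
      l.foldl (fun acc q => acc * g q) (x * y) = x * l.foldl (fun acc q => acc * g q) y := by
  intro l
  induction l with
  | nil => intro x y; rfl
  | cons a t ih =>
    intro x y
    simp only [List.foldl_cons]
    rw [mul_assoc, ih]

lemma prodOf_pair (p q : ℕ × B) (rest : List (ℕ × B)) :
    prodOf (⇑α) (p :: q :: rest) = α^[p.1] p.2 * prodOf (⇑α) (q :: rest) := by
  simp only [prodOf, List.foldl_cons]
  exact foldl_mul_assoc _ rest _ _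

lemma prodOf_cons' (p : ℕ × B) {t : List (ℕ × B)} (ht : t ≠ []) :
    prodOf (⇑α) (p :: t) = α^[p.1] p.2 * prodOf (⇑α) t := by
  cases t with
  | nil => exact absurd rfl ht
  | cons q rest => exact prodOf_pair p q rest

lemma prodOf_append {s t : List (ℕ × B)} (hs : s ≠ []) (ht : t ≠ []) :
    prodOf (⇑α) (s ++ t) = prodOf (⇑α) s * prodOf (⇑α) t := by
  induction s with
  | nil => exact absurd rfl hs
  | cons p s' ih =>
    cases s' with
    | nil =>
      rw [List.cons_append, List.nil_append, prodOf_cons' p ht]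
      rfl
    | cons q rest =>
      rw [List.cons_append, prodOf_cons' p (by simp), ih (by simp), prodOf_pair, mul_assoc]

lemma alpha_prodOf (l : List (ℕ × B)) (hl : l ≠ []) :
    α (prodOf (⇑α) l) = prodOf (⇑α) (l.map fun p => (p.1 + 1, p.2)) := by
  induction l with
  | nil => exact absurd rfl hl
  | cons p t ih =>
    cases t with
    | nil =>
      show α (α^[p.1] p.2) = α^[p.1 + 1] p.2
      rw [Function.iterate_succ_apply']
    | cons q rest =>
      rw [prodOf_pair, map_mul, ih (by simp)]
      simp only [List.map_cons]
      rw [prodOf_pair, Function.iterate_succ_apply']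

lemma tendsto_mul_left_aux {l : Filter B} (hl : ∀ᶠ e in l, ‖e‖ ≤ 1) {w : B → B} {c : B}
    (hw : Tendsto w l (𝓝 c)) (hc : Tendsto (fun e => e * c) l (𝓝 c)) :
    Tendsto (fun e => e * w e) l (𝓝 c) := by
  have h0 : Tendsto (fun e => e * (w e - c)) l (𝓝 0) := by
    apply squeeze_zero_norm' (a := fun e => ‖w e - c‖)
    · filter_upwards [hl] with e he
      calc ‖e * (w e - c)‖ ≤ ‖e‖ * ‖w e - c‖ := norm_mul_le _ _
        _ ≤ 1 * ‖w e - c‖ := by gcongr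
        _ = ‖w e - c‖ := one_mul _
    · have : Tendsto (fun e => w e - c) l (𝓝 0) := by
        simpa using hw.sub (tendsto_const_nhds (x := c))
      simpa [Function.comp_def] using (continuous_norm.tendsto _).comp this
  have : Tendsto (fun e => e * (w e - c) + e * c) l (𝓝 (0 + c)) := h0.add hc
  simpa [mul_sub, sub_add_cancel] using this

lemma tendsto_mul_right_aux {l : Filter B} (hl : ∀ᶠ e in l, ‖e‖ ≤ 1) {w : B → B} {c : B}
    (hw : Tendsto w l (𝓝 c)) (hc : Tendsto (fun e => c * e) l (𝓝 c)) :
    Tendsto (fun e => w e * e) l (𝓝 c) := by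
  have h0 : Tendsto (fun e => (w e - c) * e) l (𝓝 0) := by
    apply squeeze_zero_norm' (a := fun e => ‖w e - c‖)
    · filter_upwards [hl] with e he
      calc ‖(w e - c) * e‖ ≤ ‖w e - c‖ * ‖e‖ := norm_mul_le _ _
        _ ≤ ‖w e - c‖ * 1 := by gcongr
        _ = ‖w e - c‖ := mul_one _
    · have : Tendsto (fun e => w e - c) l (𝓝 0) := by
        simpa using hw.sub (tendsto_const_nhds (x := c))
      simpa [Function.comp_def] using (continuous_norm.tendsto _).comp this
  have : Tendsto (fun e => (w e - c) * e + c * e) l (𝓝 (0 + c)) := h0.add hc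
  simpa [sub_mul, sub_add_cancel] using this

lemma approx_filter (A : NonUnitalStarSubalgebra ℂ B) (hA : IsClosed (A : Set B)) :
    ∃ l : Filter B, l.NeBot ∧ (∀ᶠ e in l, e ∈ A ∧ ‖e‖ ≤ 1) ∧
      ∀ m ∈ A, Tendsto (fun e => e * m) l (𝓝 m) ∧ Tendsto (fun e => m * e) l (𝓝 m) := by
  letI : NonUnitalCStarAlgebra B := { }
  haveI : IsClosed ((A : Set B)) := hA
  haveI hsor : StarOrderedRing A := by
    refine StarOrderedRing.of_nonneg_iff' (fun {x y} h z => ?_) (fun x => ?_)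
    · exact add_le_add_right (α := B) h z
    · constructor
      · intro hx
        have hx' : (0 : B) ≤ (x : B) := hx
        set d : B := (x : B)
        have hsa : IsSelfAdjoint d := .of_nonneg hx'
        have hsaA : IsSelfAdjoint x := Subtype.ext hsa
        set c : ↥A := cfcₙ (Real.sqrt) x with hc
        have hmap : (c : B) = cfcₙ Real.sqrt d :=
          NonUnitalStarAlgHomClass.map_cfcₙ (NonUnitalStarSubalgebraClass.subtype A)
            Real.sqrt x (hφ := continuous_subtype_val)
        have hcsa : IsSelfAdjoint (cfcₙ Real.sqrt d) := cfcₙ_predicate Real.sqrt d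
        have hmulc : cfcₙ Real.sqrt d * cfcₙ Real.sqrt d = d := by
          rw [← cfcₙ_mul Real.sqrt Real.sqrt d]
          have : ∀ t ∈ quasispectrum ℝ d, Real.sqrt t * Real.sqrt t = id t := by
            intro t ht
            have : 0 ≤ t := quasispectrum_nonneg_of_nonneg d hx' t ht
            simp [Real.mul_self_sqrt this]
          rw [cfcₙ_congr this, cfcₙ_id ℝ d]
        refine ⟨c, ?_⟩
        apply Subtype.ext
        show (x : B) = star (c : B) * (c : B)
        rw [hmap, hcsa.star_eq, hmulc]
      · rintro ⟨s, rfl⟩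
        show (0 : B) ≤ (star s * s : ↥A)
        exact star_mul_self_nonneg (s : B)
  have happ := CStarAlgebra.increasingApproximateUnit (A := ↥A)
  refine ⟨(CStarAlgebra.approximateUnit ↥A).map (Subtype.val), ?_, ?_, ?_⟩
  · haveI := happ.neBot
    exact Filter.map_neBot
  · rw [Filter.eventually_map]
    filter_upwards [happ.eventually_norm] with e he
    exact ⟨e.2, he⟩
  · intro m hm
    constructor
    · rw [Filter.tendsto_map'_iff]
      exact (continuous_subtype_val.tendsto _).comp (happ.tendsto_mul_right ⟨m, hm⟩)
    · rw [Filter.tendsto_map'_iff]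
      exact (continuous_subtype_val.tendsto _).comp (happ.tendsto_mul_left ⟨m, hm⟩)

lemma split_lemma (A : NonUnitalStarSubalgebra ℂ B) (hA : IsClosed (A : Set B))
    (α : B →⋆ₙₐ[ℂ] B) (E : B →L[ℂ] B) (hE : IsAlphaExpectation A α E)
    {b : B} (hb : b ∈ A) (x y : B) :
    E (x * b * y) = E (x * b) * E y := by
  obtain ⟨⟨hmemE, hid, hpos, hlmul, hrmul⟩, hE1, hE2⟩ := hE
  obtain ⟨l, hne, hev, htend⟩ := approx_filter A hA
  have hnorm : ∀ᶠ e in l, ‖e‖ ≤ 1 := hev.mono fun e he => he.2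
  have hmem : ∀ᶠ e in l, e ∈ A := hev.mono fun e he => he.1
  -- the exact identity, valid for every e ∈ A
  have key : ∀ e, e ∈ A →
      e * (E (x * (b * e * e) * y) * e) = (e * (E (x * b) * e)) * (e * (E y * e)) := by
    intro e he
    have h2 := hE2 (e * (x * b) * e) (mem_hereditarySpan_of he he _)
      (e * y * e) (mem_hereditarySpan_of he he _)
    have harg : (e * (x * b) * e) * (e * y * e) = e * ((x * (b * e * e) * y) * e) := by
      simp only [mul_assoc]
    rw [harg] at h2
    rw [hlmul e he, hrmul e he] at h2
    have hl1 : E (e * (x * b) * e) = e * (E (x * b) * e) := by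
      rw [hrmul e he, hlmul e he, mul_assoc]
    have hl2 : E (e * y * e) = e * (E y * e) := by
      rw [hrmul e he, hlmul e he, mul_assoc]
    rw [hl1, hl2] at h2
    exact h2
  -- limit of the left side
  have limL : Tendsto (fun e => e * (E (x * (b * e * e) * y) * e)) l (𝓝 (E (x * b * y))) := by
    have h1 : Tendsto (fun e => b * e * e) l (𝓝 b) :=
      tendsto_mul_right_aux hnorm (htend b hb).2 (htend b hb).2
    have h2 : Tendsto (fun e => x * (b * e * e) * y) l (𝓝 (x * b * y)) :=
      (tendsto_const_nhds.mul h1).mul tendsto_const_nhds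
    have h3 : Tendsto (fun e => E (x * (b * e * e) * y)) l (𝓝 (E (x * b * y))) :=
      (E.continuous.tendsto _).comp h2
    have h4 : Tendsto (fun e => E (x * (b * e * e) * y) * e) l (𝓝 (E (x * b * y))) :=
      tendsto_mul_right_aux hnorm h3 (htend _ (hmemE _)).2
    exact tendsto_mul_left_aux hnorm h4 (htend _ (hmemE _)).1
  -- limit of the right side
  have limR : Tendsto (fun e => (e * (E (x * b) * e)) * (e * (E y * e))) l
      (𝓝 (E (x * b) * E y)) := by
    have h1 : Tendsto (fun e => e * (E (x * b) * e)) l (𝓝 (E (x * b))) :=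
      tendsto_mul_left_aux hnorm
        (tendsto_mul_right_aux hnorm tendsto_const_nhds (htend _ (hmemE _)).2)
        (htend _ (hmemE _)).1
    have h2 : Tendsto (fun e => e * (E y * e)) l (𝓝 (E y)) :=
      tendsto_mul_left_aux hnorm
        (tendsto_mul_right_aux hnorm tendsto_const_nhds (htend _ (hmemE _)).2)
        (htend _ (hmemE _)).1
    exact h1.mul h2
  have limL' : Tendsto (fun e => (e * (E (x * b) * e)) * (e * (E y * e))) l
      (𝓝 (E (x * b * y))) := by
    refine limL.congr' ?_
    filter_upwards [hmem] with e he
    exact key e he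
  exact tendsto_nhds_unique limL' limR

private lemma sum_sub_one_lemma : ∀ (l : List (ℕ × B)), (∀ p ∈ l, 1 ≤ p.1) →
    ((l.map fun p => (p.1 - 1, p.2)).map Prod.fst).sum + l.length = (l.map Prod.fst).sum := by
  intro l
  induction l with
  | nil => simp
  | cons p t ih =>
    intro h
    have hp := h p (by simp)
    have := ih (fun q hq => h q (by simp [hq]))
    simp only [List.map_cons, List.sum_cons, List.length_cons] at *
    omega

/-- The main computation, for an arbitrary `α`-expectation compatible with `φ`. -/
lemma moment_calc (A : NonUnitalStarSubalgebra ℂ B)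
    (hA : IsClosed (A : Set B)) (α : B →⋆ₙₐ[ℂ] B)
    (E : B →L[ℂ] B) (hE : IsAlphaExpectation A α E)
    (φ : B → B) (hφ : ∀ a ∈ A, E (α a) = φ a)
    (M : List ℕ → List B → B)
    (hM1 : ∀ (ns : List ℕ) (as : List B), as.length = ns.length →
      (∀ a ∈ as, a ∈ A) → φ (M ns as) = M (ns.map (· + 1)) as)
    (hM_single : ∀ a ∈ A, M [0] [a] = a)
    (hM_left : ∀ (ns : List ℕ) (a : B) (as : List B), ns ≠ [] →
      as.length = ns.length → a ∈ A → (∀ b ∈ as, b ∈ A) →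
      M (0 :: ns) (a :: as) = a * M ns as)
    (hM_right : ∀ (ns : List ℕ) (a : B) (as : List B), ns ≠ [] →
      as.length = ns.length → a ∈ A → (∀ b ∈ as, b ∈ A) →
      M (ns ++ [0]) (as ++ [a]) = M ns as * a)
    (hM_mid : ∀ (ns ms : List ℕ) (a : B) (as bs : List B), ns ≠ [] → ms ≠ [] →
      as.length = ns.length → bs.length = ms.length → a ∈ A →
      (∀ b ∈ as, b ∈ A) → (∀ b ∈ bs, b ∈ A) →
      M (ns ++ 0 :: ms) (as ++ a :: bs) = M ns as * a * M ms bs) :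
    ∀ (n : ℕ) (l : List (ℕ × B)), l.length + (l.map Prod.fst).sum ≤ n → l ≠ [] →
      (∀ p ∈ l, p.2 ∈ A) →
      E (prodOf (⇑α) l) = M (l.map Prod.fst) (l.map Prod.snd) := by
  obtain ⟨⟨hmemE, hid, hpos, hlmul, hrmul⟩, hE1, hE2⟩ := hE
  intro n
  induction n with
  | zero =>
    intro l hlen hne _
    cases l with
    | nil => exact absurd rfl hne
    | cons p t => simp at hlen
  | succ n ih =>
    intro l hlen hne hmem
    by_cases hz : ∀ p ∈ l, 1 ≤ p.1
    · -- all exponents positive: peel one α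
      set l' : List (ℕ × B) := l.map fun p => (p.1 - 1, p.2) with hl'
      have hl'ne : l' ≠ [] := by simpa [hl'] using hne
      have hstep : prodOf (⇑α) l = α (prodOf (⇑α) l') := by
        rw [alpha_prodOf l' hl'ne]
        congr 1
        rw [hl', List.map_map]
        conv_lhs => rw [show l = l.map id from (List.map_id l).symm]
        refine List.map_congr_left fun p hp => ?_
        have := hz p hp
        simp only [Function.comp, id]
        rw [Nat.sub_add_cancel this]
      have hmem' : ∀ p ∈ l', p.2 ∈ A := by
        intro p hp
        rw [hl'] at hp
        obtain ⟨q, hq, rfl⟩ := List.mem_map.mp hp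
        exact hmem q hq
      have hlen' : l'.length + (l'.map Prod.fst).sum ≤ n := by
        have hs := sum_sub_one_lemma l hz
        rw [← hl'] at hs
        have hlpos : 1 ≤ l.length := by
          cases l with
          | nil => exact absurd rfl hne
          | cons p t => simp
        have : l'.length = l.length := by simp [hl']
        omega
      have hEcalc : E (prodOf (⇑α) l') = M (l'.map Prod.fst) (l'.map Prod.snd) :=
        ih l' hlen' hl'ne hmem'
      have hmemA : E (prodOf (⇑α) l') ∈ A := hmemE _
      rw [hstep, hE1, hφ _ hmemA, hEcalc, hM1]
      · congr 1
        · rw [hl', List.map_map, List.map_map]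
          refine List.map_congr_left fun p hp => ?_
          have := hz p hp
          simp only [Function.comp]
          omega
        · rw [hl', List.map_map]
          exact List.map_congr_left fun p _ => rfl
      · simp [hl']
      · intro a ha
        rw [hl', List.map_map] at ha
        obtain ⟨q, hq, rfl⟩ := List.mem_map.mp ha
        exact hmem q hq
    · -- some exponent is zero
      push_neg at hz
      obtain ⟨q, hq, hq1⟩ := hz
      have hq0 : q.1 = 0 := by omega
      obtain ⟨s, t, rfl⟩ := List.append_of_mem hq
      have hqa : q.2 ∈ A := hmem q hq
      have hq2 : prodOf (⇑α) [q] = q.2 := by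
        show (⇑α)^[q.1] q.2 = q.2
        rw [hq0]
        rfl
      have hmems : ∀ p ∈ s, p.2 ∈ A := fun p hp => hmem p (by simp [hp])
      have hmemt : ∀ p ∈ t, p.2 ∈ A := fun p hp => hmem p (by simp [hp])
      have hmems' : ∀ b ∈ s.map Prod.snd, b ∈ A := by
        intro b hb
        obtain ⟨p, hp, rfl⟩ := List.mem_map.mp hb
        exact hmems p hp
      have hmemt' : ∀ b ∈ t.map Prod.snd, b ∈ A := by
        intro b hb
        obtain ⟨p, hp, rfl⟩ := List.mem_map.mp hb
        exact hmemt p hp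
      have hlens : s.length + (s.map Prod.fst).sum ≤ n := by
        simp only [List.map_append, List.sum_append, List.map_cons, List.sum_cons,
          List.length_append, List.length_cons] at hlen
        omega
      have hlent : t.length + (t.map Prod.fst).sum ≤ n := by
        simp only [List.map_append, List.sum_append, List.map_cons, List.sum_cons,
          List.length_append, List.length_cons] at hlen
        omega
      rcases s with _ | ⟨r, s'⟩
      · rcases t with _ | ⟨w, t'⟩
        · simp only [List.nil_append]
          rw [hq2, hid _ hqa,
            show List.map Prod.fst [q] = [0] by simp [hq0],
            show List.map Prod.snd [q] = [q.2] by simp]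
          exact (hM_single _ hqa).symm
        · simp only [List.nil_append]
          rw [prodOf_cons' q (List.cons_ne_nil _ _), hq0]
          simp only [Function.iterate_zero, id_eq]
          rw [hlmul _ hqa, ih _ hlent (List.cons_ne_nil _ _) hmemt,
            show List.map Prod.fst (q :: w :: t') = 0 :: List.map Prod.fst (w :: t') by
              simp [hq0],
            show List.map Prod.snd (q :: w :: t') = q.2 :: List.map Prod.snd (w :: t') by simp]
          exact (hM_left (List.map Prod.fst (w :: t')) q.2 (List.map Prod.snd (w :: t'))
            (by simp) (by simp) hqa hmemt').symm
      · rcases t with _ | ⟨w, t'⟩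
        · rw [prodOf_append (List.cons_ne_nil _ _) (List.cons_ne_nil _ _), hq2,
            hrmul _ hqa, ih _ hlens (List.cons_ne_nil _ _) hmems,
            show List.map Prod.fst (r :: s' ++ [q]) = List.map Prod.fst (r :: s') ++ [0] by
              simp [hq0],
            show List.map Prod.snd (r :: s' ++ [q])
                = List.map Prod.snd (r :: s') ++ [q.2] by simp]
          exact (hM_right (List.map Prod.fst (r :: s')) q.2 (List.map Prod.snd (r :: s'))
            (by simp) (by simp) hqa hmems').symm
        · rw [prodOf_append (List.cons_ne_nil _ _) (List.cons_ne_nil _ _),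
            prodOf_cons' q (List.cons_ne_nil _ _), hq0]
          simp only [Function.iterate_zero, id_eq]
          rw [← mul_assoc,
            split_lemma A hA α E ⟨⟨hmemE, hid, hpos, hlmul, hrmul⟩, hE1, hE2⟩ hqa,
            hrmul _ hqa, ih _ hlens (List.cons_ne_nil _ _) hmems,
            ih _ hlent (List.cons_ne_nil _ _) hmemt,
            show List.map Prod.fst (r :: s' ++ q :: w :: t')
                = List.map Prod.fst (r :: s') ++ 0 :: List.map Prod.fst (w :: t') by
              simp [hq0],
            show List.map Prod.snd (r :: s' ++ q :: w :: t')
                = List.map Prod.snd (r :: s') ++ q.2 :: List.map Prod.snd (w :: t') by simp]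
          exact (hM_mid (List.map Prod.fst (r :: s')) (List.map Prod.fst (w :: t')) q.2
            (List.map Prod.snd (r :: s')) (List.map Prod.snd (w :: t'))
            (by simp) (by simp) (by simp) (by simp) hqa hmems' hmemt').symm

end Aux

/-- Expectation values of an `α`-expectation are given by the moment polynomials:
`E(α^{n₁}(a₁) ⋯ α^{n_k}(a_k)) = [n₁,…,n_k; a₁,…,a_k]`, where `[·;·]` is any
family satisfying the moment-polynomial axioms MP1, MP2 for `φ = E ∘ α` on `A`.
In particular there is at most one `α`-expectation compatible with `φ`. -/
theorem alphaExpectation_moment_values (A : NonUnitalStarSubalgebra ℂ B)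
    (hA : IsClosed (A : Set B)) (α : B →⋆ₙₐ[ℂ] B) (hdyn : IsDynSystem A α)
    (E : B →L[ℂ] B) (hE : IsAlphaExpectation A α E)
    (φ : B → B) (hφ : ∀ a ∈ A, E (α a) = φ a)
    (M : List ℕ → List B → B)
    (hM1 : ∀ (ns : List ℕ) (as : List B), as.length = ns.length →
      (∀ a ∈ as, a ∈ A) → φ (M ns as) = M (ns.map (· + 1)) as)
    (hM_single : ∀ a ∈ A, M [0] [a] = a)
    (hM_left : ∀ (ns : List ℕ) (a : B) (as : List B), ns ≠ [] →
      as.length = ns.length → a ∈ A → (∀ b ∈ as, b ∈ A) →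
      M (0 :: ns) (a :: as) = a * M ns as)
    (hM_right : ∀ (ns : List ℕ) (a : B) (as : List B), ns ≠ [] →
      as.length = ns.length → a ∈ A → (∀ b ∈ as, b ∈ A) →
      M (ns ++ [0]) (as ++ [a]) = M ns as * a)
    (hM_mid : ∀ (ns ms : List ℕ) (a : B) (as bs : List B), ns ≠ [] → ms ≠ [] →
      as.length = ns.length → bs.length = ms.length → a ∈ A →
      (∀ b ∈ as, b ∈ A) → (∀ b ∈ bs, b ∈ A) →
      M (ns ++ 0 :: ms) (as ++ a :: bs) = M ns as * a * M ms bs) :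
    (∀ l : List (ℕ × B), l ≠ [] → (∀ p ∈ l, p.2 ∈ A) →
      E (prodOf (⇑α) l) = M (l.map Prod.fst) (l.map Prod.snd)) ∧
    ∀ E' : B →L[ℂ] B, IsAlphaExpectation A α E' →
      (∀ a ∈ A, E' (α a) = φ a) → E' = E := by
  constructor
  · intro l hne hmem
    exact moment_calc A hA α E hE φ hφ M hM1 hM_single hM_left hM_right hM_mid
      (l.length + (l.map Prod.fst).sum) l le_rfl hne hmem
  · intro E' hE' hφ'
    have hcalc : ∀ l : List (ℕ × B), l ≠ [] → (∀ p ∈ l, p.2 ∈ A) →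
        E' (prodOf (⇑α) l) = M (l.map Prod.fst) (l.map Prod.snd) := fun l hne hmem =>
      moment_calc A hA α E' hE' φ hφ' M hM1 hM_single hM_left hM_right hM_mid
        (l.length + (l.map Prod.fst).sum) l le_rfl hne hmem
    have hcalcE : ∀ l : List (ℕ × B), l ≠ [] → (∀ p ∈ l, p.2 ∈ A) →
        E (prodOf (⇑α) l) = M (l.map Prod.fst) (l.map Prod.snd) := fun l hne hmem =>
      moment_calc A hA α E hE φ hφ M hM1 hM_single hM_left hM_right hM_mid
        (l.length + (l.map Prod.fst).sum) l le_rfl hne hmem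
    set S : Set B := {x : B | ∃ l : List (ℕ × B), l ≠ [] ∧ (∀ p ∈ l, p.2 ∈ A) ∧
      x = prodOf (⇑α) l} with hS
    have heq : ∀ x ∈ Submodule.span ℂ S, E' x = E x := by
      intro x hx
      induction hx using Submodule.span_induction with
      | mem x hxS =>
        obtain ⟨l, hne, hmem, rfl⟩ := hxS
        rw [hcalc l hne hmem, hcalcE l hne hmem]
      | zero => simp
      | add x y _ _ hx hy => simp [hx, hy]
      | smul c x _ hx => simp [hx]
    have hdense : Dense ((Submodule.span ℂ S : Submodule ℂ B) : Set B) := by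
      rw [Submodule.dense_iff_topologicalClosure_eq_top]
      exact hdyn
    have hfun : ⇑E' = ⇑E := Continuous.ext_on hdense E'.continuous E.continuous heq
    exact ContinuousLinearMap.ext fun x => congrFun hfun x
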